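/- For m > 2 and 1 < k ≤ m, define T_i ∈ L(ℓ∞^m) by T_i e_i = e_i and T_i e_j = 0 for j ≠ i, and let 𝒯 = (T_1,...,T_k). Then ‖𝒯‖_p = k^{1/p} computed on ℓ∞^m, while the adjoint tuple 𝒯* acting on ℓ₁^m satisfies ‖𝒯*‖_p = 1. Hence in general ‖𝒯‖_p ≠ ‖𝒯*‖_p for k > 1. -/

import Mathlib

open scoped ENNReal

noncomputable section

/-- The set Π_X of pairs (x, x*) with ‖x‖ = 1, ‖x*‖ = 1 and x*(x) = 1. -/
def dualPairs (𝕜 X : Type*) [RCLike 𝕜] [NormedAddCommGroup X] [NormedSpace 𝕜 X] :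
    Set (X × (X →L[𝕜] 𝕜)) :=
  {q | ‖q.1‖ = 1 ∧ ‖q.2‖ = 1 ∧ q.2 q.1 = 1}

/-- Numerical range of an operator. -/
def numRange {𝕜 X : Type*} [RCLike 𝕜] [NormedAddCommGroup X] [NormedSpace 𝕜 X]
    (T : X →L[𝕜] X) : Set 𝕜 :=
  {c | ∃ q ∈ dualPairs 𝕜 X, c = q.2 (T q.1)}

/-- Numerical radius of an operator. -/
def numRadius {𝕜 X : Type*} [RCLike 𝕜] [NormedAddCommGroup X] [NormedSpace 𝕜 X]
    (T : X →L[𝕜] X) : ℝ :=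
  sSup {r | ∃ q ∈ dualPairs 𝕜 X, r = ‖q.2 (T q.1)‖}

/-- Joint numerical range of a k-tuple of operators. -/
def jointNumRange {𝕜 X : Type*} [RCLike 𝕜] [NormedAddCommGroup X] [NormedSpace 𝕜 X]
    {k : ℕ} (T : Fin k → X →L[𝕜] X) : Set (Fin k → 𝕜) :=
  {v | ∃ q ∈ dualPairs 𝕜 X, v = fun i => q.2 (T i q.1)}

/-- The p-th joint numerical radius of a k-tuple of operators. -/
def jointNumRadius {𝕜 X : Type*} [RCLike 𝕜] [NormedAddCommGroup X] [NormedSpace 𝕜 X]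
    (p : ℝ) {k : ℕ} (T : Fin k → X →L[𝕜] X) : ℝ :=
  sSup {r | ∃ q ∈ dualPairs 𝕜 X, r = (∑ i, ‖q.2 (T i q.1)‖ ^ p) ^ (1 / p)}

/-- The p-th joint operator norm of a k-tuple of operators. -/
def jointOpNorm {𝕜 X Y : Type*} [RCLike 𝕜] [NormedAddCommGroup X] [NormedSpace 𝕜 X]
    [NormedAddCommGroup Y] [NormedSpace 𝕜 Y]
    (p : ℝ) {k : ℕ} (T : Fin k → X →L[𝕜] Y) : ℝ :=
  sSup {r | ∃ x : X, ‖x‖ = 1 ∧ r = (∑ i, ‖T i x‖ ^ p) ^ (1 / p)}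

/-- The numerical index of a space. -/
def numIndex (𝕜 X : Type*) [RCLike 𝕜] [NormedAddCommGroup X] [NormedSpace 𝕜 X] : ℝ :=
  sInf {r | ∃ T : X →L[𝕜] X, ‖T‖ = 1 ∧ r = numRadius T}

/-- The (p,k)-th joint numerical index of a space. -/
def jointNumIndex (p : ℝ) (k : ℕ) (𝕜 X : Type*) [RCLike 𝕜] [NormedAddCommGroup X]
    [NormedSpace 𝕜 X] : ℝ :=
  sInf {r | ∃ T : Fin k → X →L[𝕜] X, jointOpNorm p T = 1 ∧ r = jointNumRadius p T}

theorem stmt8 {𝕜 : Type*} [RCLike 𝕜] {m k : ℕ} (hm : 2 < m) (hk1 : 1 < k) (hkm : k ≤ m)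
    {p : ℝ} (hp : 1 ≤ p)
    (T : Fin k → PiLp ∞ (fun _ : Fin m => 𝕜) →L[𝕜] PiLp ∞ (fun _ : Fin m => 𝕜))
    (hT : ∀ (i : Fin k) (x : PiLp ∞ (fun _ : Fin m => 𝕜)) (j : Fin m),
      T i x j = if (j : ℕ) = (i : ℕ) then x j else 0)
    (S : Fin k → PiLp 1 (fun _ : Fin m => 𝕜) →L[𝕜] PiLp 1 (fun _ : Fin m => 𝕜))
    (hS : ∀ (i : Fin k) (x : PiLp 1 (fun _ : Fin m => 𝕜)) (j : Fin m),
      S i x j = if (j : ℕ) = (i : ℕ) then x j else 0) :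
    jointOpNorm p T = (k : ℝ) ^ (1 / p) ∧ jointOpNorm p S = 1 ∧
    jointOpNorm p T ≠ jointOpNorm p S := by
  have hp0 : (0:ℝ) < p := lt_of_lt_of_le one_pos hp
  have hip : (0:ℝ) ≤ 1 / p := by positivity
  have hmpos : 0 < m := by omega
  have hkpos : 0 < k := by omega
  haveI : Nonempty (Fin m) := ⟨⟨0, hmpos⟩⟩
  set j₀ : Fin k → Fin m := Fin.castLE hkm with hj₀
  have hj₀inj : Function.Injective j₀ := Fin.castLE_injective hkm
  -- the norm of T i x
  have hTnorm : ∀ (i : Fin k) (x : PiLp ∞ (fun _ : Fin m => 𝕜)), ‖T i x‖ = ‖x (j₀ i)‖ := by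
    intro i x
    have hfe : T i x = (WithLp.equiv ∞ (∀ _ : Fin m, 𝕜)).symm
        (Pi.single (j₀ i) (x (j₀ i))) := by
      ext j
      rw [hT]
      rcases eq_or_ne j (j₀ i) with h | h
      · subst h
        simp [j₀, WithLp.equiv_symm_apply, PiLp.toLp_apply]
      · rw [if_neg (by simpa [j₀, Fin.ext_iff] using h), WithLp.equiv_symm_apply, PiLp.toLp_apply,
          Pi.single_eq_of_ne h]
    rw [hfe, WithLp.equiv_symm_apply, PiLp.norm_toLp_single]
  have hSnorm : ∀ (i : Fin k) (x : PiLp 1 (fun _ : Fin m => 𝕜)), ‖S i x‖ = ‖x (j₀ i)‖ := by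
    intro i x
    have hfe : S i x = (WithLp.equiv 1 (∀ _ : Fin m, 𝕜)).symm
        (Pi.single (j₀ i) (x (j₀ i))) := by
      ext j
      rw [hS]
      rcases eq_or_ne j (j₀ i) with h | h
      · subst h
        simp [j₀, WithLp.equiv_symm_apply, PiLp.toLp_apply]
      · rw [if_neg (by simpa [j₀, Fin.ext_iff] using h), WithLp.equiv_symm_apply, PiLp.toLp_apply,
          Pi.single_eq_of_ne h]
    rw [hfe, WithLp.equiv_symm_apply, PiLp.norm_toLp_single]
  have hcoordinf : ∀ (x : PiLp ∞ (fun _ : Fin m => 𝕜)) (j : Fin m), ‖x j‖ ≤ ‖x‖ := by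
    intro x j
    rw [PiLp.norm_eq_ciSup]
    exact le_ciSup (f := fun i => ‖x i‖) (Set.finite_range _).bddAbove j
  have hl1 : ∀ (x : PiLp 1 (fun _ : Fin m => 𝕜)), ‖x‖ = ∑ j, ‖x j‖ := by
    intro x
    rw [PiLp.norm_eq_sum (by norm_num)]
    simp
  -- upper bound for T
  have hubT : ∀ r ∈ {r | ∃ x : PiLp ∞ (fun _ : Fin m => 𝕜), ‖x‖ = 1 ∧
      r = (∑ i, ‖T i x‖ ^ p) ^ (1 / p)}, r ≤ (k : ℝ) ^ (1 / p) := by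
    rintro r ⟨x, hx, rfl⟩
    have hsum : (∑ i, ‖T i x‖ ^ p) ≤ (k : ℝ) := by
      calc (∑ i, ‖T i x‖ ^ p) ≤ ∑ _i : Fin k, (1:ℝ) := by
            refine Finset.sum_le_sum fun i _ => ?_
            exact Real.rpow_le_one (norm_nonneg _) (by rw [hTnorm]; exact hx ▸ hcoordinf x _)
              (le_of_lt hp0)
        _ = (k : ℝ) := by simp
    exact Real.rpow_le_rpow (Finset.sum_nonneg fun i _ =>
      Real.rpow_nonneg (norm_nonneg _) p) hsum hip
  -- the vector of all ones attains it
  have hmemT : ((k : ℝ) ^ (1 / p)) ∈ {r | ∃ x : PiLp ∞ (fun _ : Fin m => 𝕜), ‖x‖ = 1 ∧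
      r = (∑ i, ‖T i x‖ ^ p) ^ (1 / p)} := by
    refine ⟨(WithLp.equiv ∞ (∀ _ : Fin m, 𝕜)).symm (fun _ => 1), ?_, ?_⟩
    · rw [PiLp.norm_eq_ciSup]
      simp [WithLp.equiv_symm_apply, PiLp.toLp_apply]
    · congr 1
      have : ∀ i : Fin k, ‖T i ((WithLp.equiv ∞ (∀ _ : Fin m, 𝕜)).symm (fun _ => 1))‖ ^ p
          = 1 := by
        intro i
        rw [hTnorm]
        simp [WithLp.equiv_symm_apply, PiLp.toLp_apply]
      rw [Finset.sum_congr rfl fun i _ => this i]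
      simp
  have hT1 : jointOpNorm p T = (k : ℝ) ^ (1 / p) := by
    refine le_antisymm (csSup_le ⟨_, hmemT⟩ hubT) (le_csSup ⟨_, hubT⟩ hmemT)
  -- upper bound for S
  have hubS : ∀ r ∈ {r | ∃ x : PiLp 1 (fun _ : Fin m => 𝕜), ‖x‖ = 1 ∧
      r = (∑ i, ‖S i x‖ ^ p) ^ (1 / p)}, r ≤ (1 : ℝ) := by
    rintro r ⟨x, hx, rfl⟩
    have hcoord : ∀ j : Fin m, ‖x j‖ ≤ 1 := by
      intro j
      rw [← hx, hl1]
      exact Finset.single_le_sum (f := fun j => ‖x j‖)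
        (fun j _ => norm_nonneg _) (Finset.mem_univ j)
    have hterm : ∀ i : Fin k, ‖S i x‖ ^ p ≤ ‖x (j₀ i)‖ := by
      intro i
      rw [hSnorm]
      rcases eq_or_lt_of_le (norm_nonneg (x (j₀ i))) with h | h
      · rw [← h, Real.zero_rpow (ne_of_gt hp0)]
      · calc ‖x (j₀ i)‖ ^ p ≤ ‖x (j₀ i)‖ ^ (1:ℝ) :=
              Real.rpow_le_rpow_of_exponent_ge h (hcoord _) hp
          _ = ‖x (j₀ i)‖ := Real.rpow_one _
    have hsum : (∑ i, ‖S i x‖ ^ p) ≤ 1 := by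
      calc (∑ i, ‖S i x‖ ^ p) ≤ ∑ i, ‖x (j₀ i)‖ := Finset.sum_le_sum fun i _ => hterm i
        _ = ∑ j ∈ Finset.univ.image j₀, ‖x j‖ := by
            rw [Finset.sum_image fun a _ b _ h => hj₀inj h]
        _ ≤ ∑ j, ‖x j‖ := Finset.sum_le_sum_of_subset_of_nonneg
            (Finset.subset_univ _) (fun j _ _ => norm_nonneg _)
        _ = 1 := by rw [← hl1, hx]
    exact Real.rpow_le_one (Finset.sum_nonneg fun i _ =>
      Real.rpow_nonneg (norm_nonneg _) p) hsum hip
  have hmemS : (1 : ℝ) ∈ {r | ∃ x : PiLp 1 (fun _ : Fin m => 𝕜), ‖x‖ = 1 ∧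
      r = (∑ i, ‖S i x‖ ^ p) ^ (1 / p)} := by
    haveI : Nonempty (Fin k) := ⟨⟨0, hkpos⟩⟩
    refine ⟨(WithLp.equiv 1 (∀ _ : Fin m, 𝕜)).symm (Pi.single (j₀ ⟨0, hkpos⟩) 1), ?_, ?_⟩
    · rw [WithLp.equiv_symm_apply, PiLp.norm_toLp_single]; simp
    · have hterm : ∀ i : Fin k,
          ‖S i ((WithLp.equiv 1 (∀ _ : Fin m, 𝕜)).symm (Pi.single (j₀ ⟨0, hkpos⟩) 1))‖ ^ p
          = if i = ⟨0, hkpos⟩ then 1 else 0 := by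
        intro i
        rw [hSnorm, WithLp.equiv_symm_apply, PiLp.toLp_apply]
        rcases eq_or_ne i ⟨0, hkpos⟩ with h | h
        · subst h; simp
        · rw [if_neg h, Pi.single_eq_of_ne (fun hc => h (hj₀inj hc)), norm_zero,
            Real.zero_rpow (ne_of_gt hp0)]
      rw [Finset.sum_congr rfl fun i _ => hterm i, Finset.sum_ite_eq'
        Finset.univ (⟨0, hkpos⟩ : Fin k) (fun _ => (1:ℝ))]
      simp [Real.one_rpow]
  have hS1 : jointOpNorm p S = 1 := by
    refine le_antisymm (csSup_le ⟨_, hmemS⟩ hubS) (le_csSup ⟨_, hubS⟩ hmemS)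
  refine ⟨hT1, hS1, ?_⟩
  rw [hT1, hS1]
  have : (1:ℝ) < (k : ℝ) ^ (1 / p) := by
    rw [Real.one_lt_rpow_iff_of_pos (by exact_mod_cast hkpos)]
    exact Or.inl ⟨by exact_mod_cast hk1, by positivity⟩
  exact ne_of_gt this
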